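/- With x = vec(X) for a permutation matrix X, z₁, z₂ distinct elements of supp(x), and z₃, z₄ defined by the quadruple bit-flip rule, the resulting vector y = x − e_{z₁} − e_{z₂} + e_{z₃} + e_{z₄} equals vec(X'), where X' is obtained from X by swapping columns ⌊z₁/n⌋ and ⌊z₂/n⌋. -/
import Mathlib


open Matrix

lemma fin_eq_of_div_mod {n : ℕ} (z z' : Fin (n * n))
    (hd : z.divNat = z'.divNat) (hm : z.modNat = z'.modNat) : z = z' := by
  have h1 : (z : ℕ) / n = (z' : ℕ) / n := by
    rw [← Fin.coe_divNat, ← Fin.coe_divNat, hd]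
  have h2 : (z : ℕ) % n = (z' : ℕ) % n := by
    rw [← Fin.coe_modNat, ← Fin.coe_modNat, hm]
  have h1' : n * ((z : ℕ) / n) = n * ((z' : ℕ) / n) := by rw [h1]
  have := Nat.div_add_mod (z : ℕ) n
  have := Nat.div_add_mod (z' : ℕ) n
  exact Fin.ext (by omega)

/-- The quadruple bit-flip of `x = vec(X)` equals the vectorization of the matrix
obtained from `X` by swapping columns `⌊z₁/n⌋` and `⌊z₂/n⌋`. -/
theorem quadrupleFlip_eq_columnSwap {n : ℕ} (X : Matrix (Fin n) (Fin n) ℝ)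
    (σ : Equiv.Perm (Fin n)) (hX : ∀ r c, X r c = if r = σ c then 1 else 0)
    (x : Fin (n * n) → ℝ) (hx : ∀ z : Fin (n * n), x z = X z.modNat z.divNat)
    (z₁ z₂ z₃ z₄ : Fin (n * n))
    (h1 : x z₁ ≠ 0) (h2 : x z₂ ≠ 0) (hne : z₁ ≠ z₂)
    (h3 : (z₃ : ℕ) = (z₂ : ℕ) / n * n + (z₁ : ℕ) % n)
    (h4 : (z₄ : ℕ) = (z₁ : ℕ) / n * n + (z₂ : ℕ) % n) :
    ∀ z : Fin (n * n),
      ((x - Pi.single z₁ 1 - Pi.single z₂ 1 + Pi.single z₃ 1 + Pi.single z₄ 1 :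
          Fin (n * n) → ℝ)) z
        = X z.modNat (Equiv.swap z₁.divNat z₂.divNat z.divNat) := by
  have hn : 0 < n := by
    rcases Nat.eq_zero_or_pos n with h | h
    · exact absurd z₁.2 (by simp [h])
    · exact h
  have hr1 : z₁.modNat = σ z₁.divNat := by
    by_contra h; apply h1; rw [hx, hX]; simp [h]
  have hr2 : z₂.modNat = σ z₂.divNat := by
    by_contra h; apply h2; rw [hx, hX]; simp [h]
  have hd3 : z₃.divNat = z₂.divNat := by
    apply Fin.ext
    simp only [Fin.coe_divNat, h3]
    rw [Nat.add_comm, Nat.add_mul_div_right _ _ hn,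
      Nat.div_eq_of_lt (Nat.mod_lt _ hn), Nat.zero_add]
  have hm3 : z₃.modNat = z₁.modNat := by
    apply Fin.ext
    simp only [Fin.coe_modNat]
    have hdd : (z₃ : ℕ) / n = (z₂ : ℕ) / n := by
      rw [← Fin.coe_divNat, ← Fin.coe_divNat, hd3]
    have hdd' : n * ((z₃ : ℕ) / n) = (z₂ : ℕ) / n * n := by rw [hdd, Nat.mul_comm]
    have := Nat.div_add_mod (z₃ : ℕ) n
    omega
  have hd4 : z₄.divNat = z₁.divNat := by
    apply Fin.ext
    simp only [Fin.coe_divNat, h4]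
    rw [Nat.add_comm, Nat.add_mul_div_right _ _ hn,
      Nat.div_eq_of_lt (Nat.mod_lt _ hn), Nat.zero_add]
  have hm4 : z₄.modNat = z₂.modNat := by
    apply Fin.ext
    simp only [Fin.coe_modNat]
    have hdd : (z₄ : ℕ) / n = (z₁ : ℕ) / n := by
      rw [← Fin.coe_divNat, ← Fin.coe_divNat, hd4]
    have hdd' : n * ((z₄ : ℕ) / n) = (z₁ : ℕ) / n * n := by rw [hdd, Nat.mul_comm]
    have := Nat.div_add_mod (z₄ : ℕ) n
    omega
  have hcne : z₁.divNat ≠ z₂.divNat := by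
    intro h
    exact hne (fin_eq_of_div_mod _ _ h (by rw [hr1, hr2, h]))
  have hrne : z₁.modNat ≠ z₂.modNat := by
    rw [hr1, hr2]; exact fun h => hcne (σ.injective h)
  intro z
  simp only [Pi.add_apply, Pi.sub_apply, Pi.single_apply, hx, hX]
  rcases eq_or_ne z.divNat z₁.divNat with hc1 | hc1
  · rw [hc1, Equiv.swap_apply_left]
    have hz2 : z ≠ z₂ := fun h => hcne (by rw [← hc1, h])
    have hz3 : z ≠ z₃ := fun h => hcne (by rw [← hc1, h, hd3])
    rcases eq_or_ne z.modNat z₁.modNat with hr | hr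
    · have hz1 : z = z₁ := fin_eq_of_div_mod _ _ hc1 hr
      have hz4 : z ≠ z₄ := fun h => hrne (by rw [← hr, h, hm4])
      have hA : z.modNat = σ z₁.divNat := hr.trans hr1
      have hB : ¬ z.modNat = σ z₂.divNat := by
        rw [hA]; exact fun h => hcne (σ.injective h)
      rw [if_pos hA, if_pos hz1, if_neg hz2, if_neg hz3, if_neg hz4, if_neg hB]
      ring
    · have hz1 : z ≠ z₁ := fun h => hr (by rw [h])
      have hA : ¬ z.modNat = σ z₁.divNat := fun h => hr (h.trans hr1.symm)
      rcases eq_or_ne z.modNat z₂.modNat with hr' | hr'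
      · have hz4 : z = z₄ := fin_eq_of_div_mod _ _ (hc1.trans hd4.symm) (hr'.trans hm4.symm)
        have hB : z.modNat = σ z₂.divNat := hr'.trans hr2
        rw [if_neg hA, if_neg hz1, if_neg hz2, if_neg hz3, if_pos hz4, if_pos hB]
        ring
      · have hz4 : z ≠ z₄ := fun h => hr' (by rw [h, hm4])
        have hB : ¬ z.modNat = σ z₂.divNat := fun h => hr' (h.trans hr2.symm)
        rw [if_neg hA, if_neg hz1, if_neg hz2, if_neg hz3, if_neg hz4, if_neg hB]
        ring
  · rcases eq_or_ne z.divNat z₂.divNat with hc2 | hc2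
    · rw [hc2, Equiv.swap_apply_right]
      have hz1 : z ≠ z₁ := fun h => hc1 (by rw [h])
      have hz4 : z ≠ z₄ := fun h => hc1 (by rw [h, hd4])
      rcases eq_or_ne z.modNat z₂.modNat with hr | hr
      · have hz2 : z = z₂ := fin_eq_of_div_mod _ _ hc2 hr
        have hz3 : z ≠ z₃ := fun h => hrne (by rw [← hm3, ← h, hr])
        have hA : z.modNat = σ z₂.divNat := hr.trans hr2
        have hB : ¬ z.modNat = σ z₁.divNat := by
          rw [hA]; exact fun h => hcne (σ.injective h).symm
        rw [if_pos hA, if_neg hz1, if_pos hz2, if_neg hz3, if_neg hz4, if_neg hB]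
        ring
      · have hz2 : z ≠ z₂ := fun h => hr (by rw [h])
        have hA : ¬ z.modNat = σ z₂.divNat := fun h => hr (h.trans hr2.symm)
        rcases eq_or_ne z.modNat z₁.modNat with hr' | hr'
        · have hz3 : z = z₃ := fin_eq_of_div_mod _ _ (hc2.trans hd3.symm) (hr'.trans hm3.symm)
          have hB : z.modNat = σ z₁.divNat := hr'.trans hr1
          rw [if_neg hA, if_neg hz1, if_neg hz2, if_pos hz3, if_neg hz4, if_pos hB]
          ring
        · have hz3 : z ≠ z₃ := fun h => hr' (by rw [h, hm3])
          have hB : ¬ z.modNat = σ z₁.divNat := fun h => hr' (h.trans hr1.symm)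
          rw [if_neg hA, if_neg hz1, if_neg hz2, if_neg hz3, if_neg hz4, if_neg hB]
          ring
    · rw [Equiv.swap_apply_of_ne_of_ne hc1 hc2]
      have hz1 : z ≠ z₁ := fun h => hc1 (by rw [h])
      have hz2 : z ≠ z₂ := fun h => hc2 (by rw [h])
      have hz3 : z ≠ z₃ := fun h => hc2 (by rw [h, hd3])
      have hz4 : z ≠ z₄ := fun h => hc1 (by rw [h, hd4])
      rw [if_neg hz1, if_neg hz2, if_neg hz3, if_neg hz4]
      ring
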